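/- Let M ∈ 𝓜 be an orthogonal matrix with trace 4p where p ≠ 1. Then I − M is invertible and (I − M)⁻¹ = (1/(2−2p))·(I − Mᵀ). -/

import Mathlib

open Matrix

/-- The set 𝓜 of quaternion-like 4×4 real matrices. -/
def Mset : Set (Matrix (Fin 4) (Fin 4) ℝ) :=
  { M | ∃ a b c d : ℝ,
      M = !![a, -b, -c, -d;
             b,  a, -d,  c;
             c,  d,  a, -b;
             d, -c,  b,  a] }

/-- If `M ∈ 𝓜` is orthogonal with trace `4p`, `p ≠ 1`, then `I - M` is invertible
and `(I - M)⁻¹ = (1/(2-2p)) • (I - Mᵀ)`. -/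
theorem stmt_3 (M : Matrix (Fin 4) (Fin 4) ℝ) (hM : M ∈ Mset)
    (horth : M * Mᵀ = 1) (p : ℝ) (htr : Matrix.trace M = 4 * p) (hp : p ≠ 1) :
    IsUnit (1 - M) ∧ (1 - M)⁻¹ = (1 / (2 - 2 * p)) • (1 - Mᵀ) := by
  obtain ⟨a, b, c, d, rfl⟩ := hM
  have ha : a = p := by
    have := htr
    simp [Matrix.trace, Fin.sum_univ_four] at this
    linarith
  subst ha
  set M := !![a, -b, -c, -d; b, a, -d, c; c, d, a, -b; d, -c, b, a] with hMdef
  have hT : Mᵀ = !![a, b, c, d; -b, a, d, -c; -c, -d, a, b; -d, c, -b, a] := by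
    rw [hMdef]
    ext i j
    fin_cases i <;> fin_cases j <;> rfl
  have hsum : M + Mᵀ = (2 * a) • 1 := by
    rw [hMdef, hT]
    ext i j
    fin_cases i <;> fin_cases j <;>
      simp [Matrix.one_apply] <;> ring
  have hne : (2 - 2 * a) ≠ 0 := by
    intro h; apply hp; linarith
  have hinv : (1 / (2 - 2 * a)) * (2 - 2 * a) = 1 := by
    field_simp
  have hkey : (1 - M) * (1 - Mᵀ) = (2 - 2 * a) • 1 := by
    have h1 : (1 - M) * (1 - Mᵀ) = 1 - Mᵀ - M + M * Mᵀ := by noncomm_ring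
    have h3 : (1 : Matrix (Fin 4) (Fin 4) ℝ) - Mᵀ - M + 1 =
        (2 : ℝ) • (1 : Matrix (Fin 4) (Fin 4) ℝ) - (M + Mᵀ) := by module
    rw [h1, horth, h3, hsum]
    module
  have hmul : (1 - M) * ((1 / (2 - 2 * a)) • (1 - Mᵀ)) = 1 := by
    rw [Matrix.mul_smul, hkey, smul_smul, hinv, one_smul]
  exact ⟨(Matrix.isUnit_iff_isUnit_det _).mpr (Matrix.isUnit_det_of_right_inverse hmul), Matrix.inv_eq_right_inv hmul⟩
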